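/- Let ι be a finite index set, K : ι → ι → ℝ symmetric with K_{mn} ≥ 0, D : ι → ℝ with D_m > 0, θ* : ι → ℝ, and P*_m = Σ_n K_{mn} · sin(θ*_m − θ*_n). Suppose θ : ℝ → ι → ℝ is differentiable and satisfies the reduced swing equation (θ_m)'(t) = D_m^{−1} · (P*_m − Σ_n K_{mn} · sin(θ_m(t) − θ_n(t))) for all t and m. Fix t₀, and assume that for every pair m ≠ n with K_{mn} > 0, δ*_{mn} := θ*_m − θ*_n ∈ (−π/2, π/2) and θ_m(t₀) − θ_n(t₀) ∈ (−π − δ*_{mn}, π − δ*_{mn}), and that there exists at least one pair m ≠ n with K_{mn} > 0 and θ_m(t₀) − θ_n(t₀) ≠ δ*_{mn}. Then the derivative at t₀ of H(t) = Σ_m (1/2) D_m (θ*_m − θ_m(t))² is strictly negative. -/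

import Mathlib

open Finset Real

lemma key_ineq (δs δ : ℝ) (h1 : -(π/2) < δs) (h2 : δs < π/2)
    (h3 : -π - δs < δ) (h4 : δ < π - δs) :
    (δ - δs) * (Real.sin δs - Real.sin δ) ≤ 0 ∧
    (δ ≠ δs → (δ - δs) * (Real.sin δs - Real.sin δ) < 0) := by
  have hpi := Real.pi_pos
  have hs : Real.sin δ - Real.sin δs
      = 2 * Real.sin ((δ - δs)/2) * Real.cos ((δ + δs)/2) := Real.sin_sub_sin δ δs
  have hcos : 0 < Real.cos ((δ + δs)/2) := by
    apply Real.cos_pos_of_mem_Ioo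
    constructor <;> nlinarith
  set x := (δ - δs)/2 with hxdef
  have hxlt : x < π := by rw [hxdef]; nlinarith
  have hxgt : -π < x := by rw [hxdef]; nlinarith
  have hxs : 0 ≤ x * Real.sin x := by
    rcases lt_trichotomy x 0 with h | h | h
    · have : Real.sin x < 0 := by
        have := Real.sin_pos_of_pos_of_lt_pi (x := -x) (by linarith) (by linarith)
        rw [Real.sin_neg] at this; linarith
      nlinarith
    · simp [h]
    · have := Real.sin_pos_of_pos_of_lt_pi h hxlt
      nlinarith
  have h2x : δ - δs = 2 * x := by rw [hxdef]; ring
  have keyeq : (δ - δs) * (Real.sin δs - Real.sin δ)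
      = -(4 * (x * Real.sin x) * Real.cos ((δ + δs)/2)) := by
    rw [show Real.sin δs - Real.sin δ = -(Real.sin δ - Real.sin δs) by ring, hs, h2x]; ring
  constructor
  · rw [keyeq]
    have : 0 ≤ 4 * (x * Real.sin x) * Real.cos ((δ + δs)/2) :=
      mul_nonneg (mul_nonneg (by norm_num) hxs) hcos.le
    linarith
  · intro hne
    have hx0 : x ≠ 0 := by
      rw [hxdef]; intro h; apply hne; linarith [h]
    have hxs' : 0 < x * Real.sin x := by
      rcases lt_trichotomy x 0 with h | h | h
      · have : Real.sin x < 0 := by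
          have := Real.sin_pos_of_pos_of_lt_pi (x := -x) (by linarith) (by linarith)
          rw [Real.sin_neg] at this; linarith
        nlinarith
      · exact absurd h hx0
      · have := Real.sin_pos_of_pos_of_lt_pi h hxlt
        nlinarith
    rw [keyeq]
    have : 0 < 4 * (x * Real.sin x) * Real.cos ((δ + δs)/2) :=
      mul_pos (mul_pos (by norm_num) hxs') hcos
    linarith

theorem lyapunov_deriv_neg
    {ι : Type*} [Fintype ι] [LinearOrder ι]
    (K : ι → ι → ℝ) (hsym : ∀ m n, K m n = K n m) (hnonneg : ∀ m n, 0 ≤ K m n)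
    (D : ι → ℝ) (hD : ∀ m, 0 < D m)
    (θs : ι → ℝ) (Ps : ι → ℝ)
    (hPs : ∀ m, Ps m = ∑ n, K m n * Real.sin (θs m - θs n))
    (θ : ℝ → ι → ℝ) (hdiff : ∀ m, Differentiable ℝ (fun t => θ t m))
    (hswing : ∀ t m, deriv (fun s => θ s m) t =
      (D m)⁻¹ * (Ps m - ∑ n, K m n * Real.sin (θ t m - θ t n)))
    (t₀ : ℝ)
    (hreg : ∀ m n, m ≠ n → 0 < K m n →
      (θs m - θs n) ∈ Set.Ioo (-(π / 2)) (π / 2) ∧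
      (θ t₀ m - θ t₀ n) ∈ Set.Ioo (-π - (θs m - θs n)) (π - (θs m - θs n)))
    (hne : ∃ m n, m ≠ n ∧ 0 < K m n ∧ θ t₀ m - θ t₀ n ≠ θs m - θs n) :
    deriv (fun t => ∑ m, (1 / 2) * D m * (θs m - θ t m) ^ 2) t₀ < 0 := by
  classical
  set f : ι → ℝ := θ t₀ with hf
  set v : ι → ℝ := fun m => (D m)⁻¹ * (Ps m - ∑ n, K m n * Real.sin (f m - f n)) with hvdef
  have hv : ∀ m, HasDerivAt (fun t => θ t m) (v m) t₀ := by
    intro m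
    have h := ((hdiff m) t₀).hasDerivAt
    rwa [hswing t₀ m] at h
  have hH : HasDerivAt (fun t => ∑ m, (1 / 2) * D m * (θs m - θ t m) ^ 2)
      (∑ m, (1/2) * D m * ((2:ℕ) * (θs m - f m) ^ 1 * (-(v m)))) t₀ := by
    apply HasDerivAt.fun_sum
    intro m _
    exact (((hv m).const_sub (θs m)).pow 2).const_mul _
  rw [hH.deriv]
  set G : ι → ι → ℝ := fun m n =>
    K m n * (f m - θs m) * (Real.sin (θs m - θs n) - Real.sin (f m - f n)) with hGdef
  have hterm : ∀ m, (1/2) * D m * ((2:ℕ) * (θs m - f m) ^ 1 * (-(v m))) = ∑ n, G m n := by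
    intro m
    have hDm := (hD m).ne'
    rw [hvdef]
    simp only []
    rw [hPs m, ← Finset.sum_sub_distrib]
    rw [show ((1:ℝ)/2) * D m * ((2:ℕ) * (θs m - f m) ^ 1 *
        (-((D m)⁻¹ * (∑ n, (K m n * Real.sin (θs m - θs n) - K m n * Real.sin (f m - f n))))))
      = (D m * (D m)⁻¹) * ((f m - θs m) *
        ∑ n, (K m n * Real.sin (θs m - θs n) - K m n * Real.sin (f m - f n))) by push_cast; ring]
    rw [mul_inv_cancel₀ hDm, one_mul, Finset.mul_sum]
    exact Finset.sum_congr rfl fun n _ => by rw [hGdef]; ring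
  rw [Finset.sum_congr rfl fun m _ => hterm m]
  -- Now goal: ∑ m, ∑ n, G m n < 0
  have hpair : ∀ m n, G m n + G n m ≤ 0 := by
    intro m n
    rcases eq_or_ne m n with rfl | hmn
    · simp [hGdef]
    rcases eq_or_lt_of_le (hnonneg m n) with hK | hK
    · have hK' : K m n = 0 := hK.symm
      have hK'' : K n m = 0 := by rw [← hsym]; exact hK'
      simp [hGdef, hK', hK'']
    · obtain ⟨⟨ha, hb⟩, ⟨hc, hd⟩⟩ := hreg m n hmn hK
      have heq : G m n + G n m = K m n * (((f m - f n) - (θs m - θs n)) *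
          (Real.sin (θs m - θs n) - Real.sin (f m - f n))) := by
        rw [hGdef]
        simp only []
        rw [hsym n m, show θs n - θs m = -(θs m - θs n) by ring,
          show f n - f m = -(f m - f n) by ring, Real.sin_neg, Real.sin_neg]
        ring
      rw [heq]
      have := (key_ineq (θs m - θs n) (f m - f n) ha hb hc hd).1
      exact mul_nonpos_of_nonneg_of_nonpos hK.le this
  obtain ⟨m₀, n₀, hmn₀, hK₀, hne₀⟩ := hne
  have hpairs : G m₀ n₀ + G n₀ m₀ < 0 := by
    obtain ⟨⟨ha, hb⟩, ⟨hc, hd⟩⟩ := hreg m₀ n₀ hmn₀ hK₀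
    have heq : G m₀ n₀ + G n₀ m₀ = K m₀ n₀ * (((f m₀ - f n₀) - (θs m₀ - θs n₀)) *
        (Real.sin (θs m₀ - θs n₀) - Real.sin (f m₀ - f n₀))) := by
      rw [hGdef]
      simp only []
      rw [hsym n₀ m₀, show θs n₀ - θs m₀ = -(θs m₀ - θs n₀) by ring,
        show f n₀ - f m₀ = -(f m₀ - f n₀) by ring, Real.sin_neg, Real.sin_neg]
      ring
    rw [heq]
    have := (key_ineq (θs m₀ - θs n₀) (f m₀ - f n₀) ha hb hc hd).2 hne₀
    exact mul_neg_of_pos_of_neg hK₀ this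
  have hcomm : ∑ m, ∑ n, G m n = ∑ m, ∑ n, G n m := Finset.sum_comm
  have hdouble : (∑ m, ∑ n, G m n) + (∑ m, ∑ n, G m n)
      = ∑ m, ∑ n, (G m n + G n m) := by
    nth_rewrite 2 [hcomm]
    rw [← Finset.sum_add_distrib]
    exact Finset.sum_congr rfl fun m _ => (Finset.sum_add_distrib).symm
  have hlt : ∑ m, ∑ n, (G m n + G n m) < 0 := by
    rw [← Finset.sum_product']
    have : (0:ℝ) = ∑ p ∈ (univ ×ˢ univ : Finset (ι × ι)), (0:ℝ) := by simp
    rw [this]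
    apply Finset.sum_lt_sum
    · intro p _; exact hpair p.1 p.2
    · exact ⟨(m₀, n₀), by simp, hpairs⟩
  linarith
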